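/- Let η ∈ ℂ with η ≠ 1. Define functions Aₙ, Bₙ on ℂ \ {s : s² = η} recursively by A₀(s) = s/(s² − η), B₀(s) = 1/(s² − η), Aₙ₊₁(s) = (−1/(s² − η))·Aₙ′(s), Bₙ₊₁(s) = (−1/(s² − η))·Bₙ′(s). Then −A₃(−1) = 4(2η² + 21η + 7)/(η − 1)⁷ and −B₃(−1) = −40(η + 2)/(η − 1)⁷. -/

import Mathlib

open Complex

private lemma step_eq (η : ℂ) (X F G D : ℂ → ℂ)
    (hXF : ∀ s : ℂ, s ^ 2 - η ≠ 0 → X s = F s)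
    (hD : ∀ s : ℂ, s ^ 2 - η ≠ 0 → HasDerivAt F (D s) s)
    (hG : ∀ s : ℂ, s ^ 2 - η ≠ 0 → -(s ^ 2 - η)⁻¹ * D s = G s) :
    ∀ s : ℂ, s ^ 2 - η ≠ 0 → -(s ^ 2 - η)⁻¹ * deriv X s = G s := by
  intro s hs
  have hc : Continuous fun s : ℂ => s ^ 2 - η := by continuity
  have hU : IsOpen {s : ℂ | s ^ 2 - η ≠ 0} := isOpen_ne.preimage hc
  have heq : X =ᶠ[nhds s] F :=
    Filter.eventuallyEq_of_mem (hU.mem_nhds hs) (fun t ht => hXF t ht)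
  rw [heq.deriv_eq, (hD s hs).deriv]
  exact hG s hs

/-- Closed forms `α₃ = 4(2η²+21η+7)/(η−1)⁷` and `β₃ = −40(η+2)/(η−1)⁷` for the example
`f₀(t) = 1/(t+1)`, where `αₙ = −Aₙ(−1)` and `βₙ = −Bₙ(−1)`. -/
theorem example_coefficients_n3
    (η : ℂ) (hη : η ≠ 1)
    (A B : ℕ → ℂ → ℂ)
    (hA0 : ∀ s : ℂ, A 0 s = s / (s ^ 2 - η))
    (hB0 : ∀ s : ℂ, B 0 s = 1 / (s ^ 2 - η))
    (hAsucc : ∀ n, ∀ s : ℂ, A (n + 1) s = (-(s ^ 2 - η)⁻¹) * deriv (A n) s)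
    (hBsucc : ∀ n, ∀ s : ℂ, B (n + 1) s = (-(s ^ 2 - η)⁻¹) * deriv (B n) s) :
    -A 3 (-1) = 4 * (2 * η ^ 2 + 21 * η + 7) / (η - 1) ^ 7 ∧
    -B 3 (-1) = -(40 * (η + 2) / (η - 1) ^ 7) := by
  have hden : ∀ s : ℂ, HasDerivAt (fun x : ℂ => x ^ 2 - η) (2 * s) s := by
    intro s
    simpa using (hasDerivAt_pow 2 s).sub_const η
  -- A chain
  have hA0' : ∀ s : ℂ, s ^ 2 - η ≠ 0 → A 0 s = s / (s ^ 2 - η) := fun s _ => hA0 s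
  have hA1 : ∀ s : ℂ, s ^ 2 - η ≠ 0 → A 1 s = (s ^ 2 + η) / (s ^ 2 - η) ^ 3 := by
    intro s hs
    rw [hAsucc 0 s]
    refine step_eq η (A 0) (fun s => s / (s ^ 2 - η))
      (fun s => (s ^ 2 + η) / (s ^ 2 - η) ^ 3)
      (fun s => (1 * (s ^ 2 - η) - s * (2 * s)) / (s ^ 2 - η) ^ 2)
      hA0' (fun s hs => (hasDerivAt_id s).div (hden s) hs) ?_ s hs
    intro s hs
    rw [eq_div_iff (pow_ne_zero 3 hs), mul_comm, ← mul_assoc, mul_div_assoc',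
      div_eq_iff (pow_ne_zero 2 hs)]
    have h := mul_inv_cancel₀ hs
    linear_combination (-(1 * (s ^ 2 - η) - s * (2 * s)) * (s ^ 2 - η) ^ 2) * h
  have hA2 : ∀ s : ℂ, s ^ 2 - η ≠ 0 → A 2 s = (4 * s ^ 3 + 8 * s * η) / (s ^ 2 - η) ^ 5 := by
    intro s hs
    rw [hAsucc 1 s]
    refine step_eq η (A 1) (fun s => (s ^ 2 + η) / (s ^ 2 - η) ^ 3)
      (fun s => (4 * s ^ 3 + 8 * s * η) / (s ^ 2 - η) ^ 5)
      (fun s => (2 * s * (s ^ 2 - η) ^ 3 - (s ^ 2 + η) * (3 * (s ^ 2 - η) ^ 2 * (2 * s))) / ((s ^ 2 - η) ^ 3) ^ 2)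
      hA1 ?_ ?_ s hs
    · intro s hs
      have hnum : HasDerivAt (fun x : ℂ => x ^ 2 + η) (2 * s) s := by
        simpa using (hasDerivAt_pow 2 s).add_const η
      have hd3 : HasDerivAt (fun x : ℂ => (x ^ 2 - η) ^ 3) (3 * (s ^ 2 - η) ^ 2 * (2 * s)) s := by
        simpa using (hden s).fun_pow 3
      exact hnum.div hd3 (pow_ne_zero 3 hs)
    · intro s hs
      rw [eq_div_iff (pow_ne_zero 5 hs), mul_comm, ← mul_assoc, mul_div_assoc',
        div_eq_iff (pow_ne_zero 2 (pow_ne_zero 3 hs))]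
      have h := mul_inv_cancel₀ hs
      linear_combination (-(2 * s * (s ^ 2 - η) ^ 3 -
        (s ^ 2 + η) * (3 * (s ^ 2 - η) ^ 2 * (2 * s))) * (s ^ 2 - η) ^ 4) * h
  have hA3 : ∀ s : ℂ, s ^ 2 - η ≠ 0 →
      A 3 s = (28 * s ^ 4 + 84 * s ^ 2 * η + 8 * η ^ 2) / (s ^ 2 - η) ^ 7 := by
    intro s hs
    rw [hAsucc 2 s]
    refine step_eq η (A 2) (fun s => (4 * s ^ 3 + 8 * s * η) / (s ^ 2 - η) ^ 5)
      (fun s => (28 * s ^ 4 + 84 * s ^ 2 * η + 8 * η ^ 2) / (s ^ 2 - η) ^ 7)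
      (fun s => ((12 * s ^ 2 + 8 * η) * (s ^ 2 - η) ^ 5 - (4 * s ^ 3 + 8 * s * η) * (5 * (s ^ 2 - η) ^ 4 * (2 * s))) / ((s ^ 2 - η) ^ 5) ^ 2)
      hA2 ?_ ?_ s hs
    · intro s hs
      have hnum : HasDerivAt (fun x : ℂ => 4 * x ^ 3 + 8 * x * η) (12 * s ^ 2 + 8 * η) s := by
        have h1 : HasDerivAt (fun x : ℂ => 4 * x ^ 3) (4 * (3 * s ^ 2)) s := by
          simpa using (hasDerivAt_pow 3 s).const_mul 4
        have h2 : HasDerivAt (fun x : ℂ => 8 * x * η) (8 * η) s := by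
          simpa [mul_comm, mul_assoc, mul_left_comm] using
            ((hasDerivAt_id s).const_mul (8 : ℂ)).mul_const η
        have := h1.fun_add h2
        rw [show (12 : ℂ) * s ^ 2 + 8 * η = 4 * (3 * s ^ 2) + 8 * η by ring]
        exact this
      have hd5 : HasDerivAt (fun x : ℂ => (x ^ 2 - η) ^ 5) (5 * (s ^ 2 - η) ^ 4 * (2 * s)) s := by
        simpa using (hden s).fun_pow 5
      exact hnum.div hd5 (pow_ne_zero 5 hs)
    · intro s hs
      rw [eq_div_iff (pow_ne_zero 7 hs), mul_comm, ← mul_assoc, mul_div_assoc',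
        div_eq_iff (pow_ne_zero 2 (pow_ne_zero 5 hs))]
      have h := mul_inv_cancel₀ hs
      linear_combination (((12 * s ^ 2 + 8 * η) * (s ^ 2 - η) ^ 5 -
        (4 * s ^ 3 + 8 * s * η) * (5 * (s ^ 2 - η) ^ 4 * (2 * s))) * -(s ^ 2 - η) ^ 6) * h
  -- B chain
  have hB0' : ∀ s : ℂ, s ^ 2 - η ≠ 0 → B 0 s = 1 / (s ^ 2 - η) := fun s _ => hB0 s
  have hB1 : ∀ s : ℂ, s ^ 2 - η ≠ 0 → B 1 s = 2 * s / (s ^ 2 - η) ^ 3 := by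
    intro s hs
    rw [hBsucc 0 s]
    refine step_eq η (B 0) (fun s => 1 / (s ^ 2 - η))
      (fun s => 2 * s / (s ^ 2 - η) ^ 3)
      (fun s => (0 * (s ^ 2 - η) - 1 * (2 * s)) / (s ^ 2 - η) ^ 2)
      hB0' (fun s hs => (hasDerivAt_const s (1 : ℂ)).div (hden s) hs) ?_ s hs
    intro s hs
    rw [eq_div_iff (pow_ne_zero 3 hs), mul_comm, ← mul_assoc, mul_div_assoc',
      div_eq_iff (pow_ne_zero 2 hs)]
    have h := mul_inv_cancel₀ hs
    linear_combination (-(0 * (s ^ 2 - η) - 1 * (2 * s)) * (s ^ 2 - η) ^ 2) * h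
  have hB2 : ∀ s : ℂ, s ^ 2 - η ≠ 0 → B 2 s = (10 * s ^ 2 + 2 * η) / (s ^ 2 - η) ^ 5 := by
    intro s hs
    rw [hBsucc 1 s]
    refine step_eq η (B 1) (fun s => 2 * s / (s ^ 2 - η) ^ 3)
      (fun s => (10 * s ^ 2 + 2 * η) / (s ^ 2 - η) ^ 5)
      (fun s => (2 * (s ^ 2 - η) ^ 3 - 2 * s * (3 * (s ^ 2 - η) ^ 2 * (2 * s))) / ((s ^ 2 - η) ^ 3) ^ 2)
      hB1 ?_ ?_ s hs
    · intro s hs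
      have hnum : HasDerivAt (fun x : ℂ => 2 * x) (2 : ℂ) s := by
        simpa using (hasDerivAt_id s).const_mul (2 : ℂ)
      have hd3 : HasDerivAt (fun x : ℂ => (x ^ 2 - η) ^ 3) (3 * (s ^ 2 - η) ^ 2 * (2 * s)) s := by
        simpa using (hden s).fun_pow 3
      exact hnum.div hd3 (pow_ne_zero 3 hs)
    · intro s hs
      rw [eq_div_iff (pow_ne_zero 5 hs), mul_comm, ← mul_assoc, mul_div_assoc',
        div_eq_iff (pow_ne_zero 2 (pow_ne_zero 3 hs))]
      have h := mul_inv_cancel₀ hs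
      linear_combination (-(2 * (s ^ 2 - η) ^ 3 -
        2 * s * (3 * (s ^ 2 - η) ^ 2 * (2 * s))) * (s ^ 2 - η) ^ 4) * h
  have hB3 : ∀ s : ℂ, s ^ 2 - η ≠ 0 →
      B 3 s = (80 * s ^ 3 + 40 * s * η) / (s ^ 2 - η) ^ 7 := by
    intro s hs
    rw [hBsucc 2 s]
    refine step_eq η (B 2) (fun s => (10 * s ^ 2 + 2 * η) / (s ^ 2 - η) ^ 5)
      (fun s => (80 * s ^ 3 + 40 * s * η) / (s ^ 2 - η) ^ 7)
      (fun s => (20 * s * (s ^ 2 - η) ^ 5 - (10 * s ^ 2 + 2 * η) * (5 * (s ^ 2 - η) ^ 4 * (2 * s))) / ((s ^ 2 - η) ^ 5) ^ 2)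
      hB2 ?_ ?_ s hs
    · intro s hs
      have hnum : HasDerivAt (fun x : ℂ => 10 * x ^ 2 + 2 * η) (20 * s) s := by
        have h1 : HasDerivAt (fun x : ℂ => 10 * x ^ 2) (10 * (2 * s)) s := by
          simpa using (hasDerivAt_pow 2 s).const_mul 10
        have := h1.add_const (2 * η)
        rw [show (20 : ℂ) * s = 10 * (2 * s) by ring]
        exact this
      have hd5 : HasDerivAt (fun x : ℂ => (x ^ 2 - η) ^ 5) (5 * (s ^ 2 - η) ^ 4 * (2 * s)) s := by
        simpa using (hden s).fun_pow 5
      exact hnum.div hd5 (pow_ne_zero 5 hs)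
    · intro s hs
      rw [eq_div_iff (pow_ne_zero 7 hs), mul_comm, ← mul_assoc, mul_div_assoc',
        div_eq_iff (pow_ne_zero 2 (pow_ne_zero 5 hs))]
      have h := mul_inv_cancel₀ hs
      linear_combination (-(20 * s * (s ^ 2 - η) ^ 5 -
        (10 * s ^ 2 + 2 * η) * (5 * (s ^ 2 - η) ^ 4 * (2 * s))) * (s ^ 2 - η) ^ 6) * h
  -- evaluation at s = -1
  have hm1 : ((-1 : ℂ)) ^ 2 - η ≠ 0 := by
    intro h
    apply hη
    have : (1 : ℂ) - η = 0 := by linear_combination h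
    linear_combination -this
  have hη1 : η - 1 ≠ 0 := sub_ne_zero.mpr hη
  constructor
  · rw [hA3 (-1) hm1, ← neg_div,
      div_eq_div_iff (pow_ne_zero 7 hm1) (pow_ne_zero 7 hη1)]
    ring
  · rw [hB3 (-1) hm1, ← neg_div, ← neg_div,
      div_eq_div_iff (pow_ne_zero 7 hm1) (pow_ne_zero 7 hη1)]
    ring
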